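/- Fix an n-tuple F = (f_1,…,f_n) of elements of P_n and let D = D_F be the derivation with D(x_i) = f_i. Then for every m ≥ 1 and every a ∈ P_n, Σ (−1)^{k−1} · r_1 · Z_{r_1}(Z_{r_2}(⋯ Z_{r_k}(a) ⋯)) = (−1)^{m−1} · D^{[m]}(a), where the sum ranges over all compositions (r_1,…,r_k) of m, i.e., all finite sequences of positive integers with r_1 + ⋯ + r_k = m. -/

import Mathlib

open MvPolynomial

/-- `Pn k n` is the polynomial algebra `k[x₁,…,xₙ]`. -/
abbrev Pn (k : Type*) [CommRing k] (n : ℕ) := MvPolynomial (Fin n) k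

/-- `Der k n` is the space of `k`-linear derivations of `Pn k n`. -/
abbrev Der (k : Type*) [CommRing k] (n : ℕ) := Derivation k (Pn k n) (Pn k n)

variable {k : Type*} [Field k] [CharZero k] {n : ℕ}

/-- The left-symmetric product of derivations: `(D · E)(xᵢ) = D (E xᵢ)`. -/
noncomputable def lsMul (D E : Der k n) : Der k n :=
  MvPolynomial.mkDerivation k (fun i => D (E (MvPolynomial.X i)))

/-- The Jacobian matrix of a derivation: `(J D)ᵢⱼ = ∂(D xᵢ)/∂xⱼ`. -/
noncomputable def jac (D : Der k n) : Matrix (Fin n) (Fin n) (Pn k n) :=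
  Matrix.of fun i j => MvPolynomial.pderiv j (D (MvPolynomial.X i))

/-- The divergence of a derivation. -/
noncomputable def divg (D : Der k n) : Pn k n :=
  ∑ i, MvPolynomial.pderiv i (D (MvPolynomial.X i))

/-- Right powers: `rpow D 1 = D`, `rpow D (r+1) = (rpow D r) · D` (for `r ≥ 1`). -/
noncomputable def rpow (D : Der k n) : ℕ → Der k n
  | 0 => D
  | 1 => D
  | (r+2) => lsMul (rpow D (r+1)) D

/-- Left powers: `lpow D 1 = D`, `lpow D (r+1) = D · (lpow D r)` (for `r ≥ 1`). -/
noncomputable def lpow (D : Der k n) : ℕ → Der k n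
  | 0 => D
  | 1 => D
  | (r+2) => lsMul D (lpow D (r+1))

/-- Right multiplication operator `R_D : E ↦ E · D`, as a `k`-linear endomorphism. -/
noncomputable def rmulOp (D : Der k n) : Der k n →ₗ[k] Der k n where
  toFun E := lsMul E D
  map_add' E₁ E₂ := by
    show (MvPolynomial.mkDerivationEquiv k) _ =
      (MvPolynomial.mkDerivationEquiv k) _ + (MvPolynomial.mkDerivationEquiv k) _
    rw [← map_add]
    exact congrArg _ (funext fun i => by simp)
  map_smul' c E := by
    show (MvPolynomial.mkDerivationEquiv k) _ = c • (MvPolynomial.mkDerivationEquiv k) _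
    rw [← map_smul]
    exact congrArg _ (funext fun i => by simp)

/-- Left multiplication operator `L_D : E ↦ D · E`, as a `k`-linear endomorphism. -/
noncomputable def lmulOp (D : Der k n) : Der k n →ₗ[k] Der k n where
  toFun E := lsMul D E
  map_add' E₁ E₂ := by
    show (MvPolynomial.mkDerivationEquiv k) _ =
      (MvPolynomial.mkDerivationEquiv k) _ + (MvPolynomial.mkDerivationEquiv k) _
    rw [← map_add]
    exact congrArg _ (funext fun i => by simp)
  map_smul' c E := by
    show (MvPolynomial.mkDerivationEquiv k) _ = c • (MvPolynomial.mkDerivationEquiv k) _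
    rw [← map_smul]
    exact congrArg _ (funext fun i => by simp)

/-- `Zc F i a` is the coefficient of `t^i` in the image of `a` under `xⱼ ↦ xⱼ + t·fⱼ`. -/
noncomputable def Zc (F : Fin n → Pn k n) (i : ℕ) (a : Pn k n) : Pn k n :=
  (MvPolynomial.aeval
    (fun j => Polynomial.C (MvPolynomial.X j) + Polynomial.C (F j) * Polynomial.X :
      Fin n → Polynomial (Pn k n)) a).coeff i

/-- `PsiOp F m a = Σ (−1)^{k−1} r_k Z_{r₁}(Z_{r₂}(⋯ Z_{r_k}(a)⋯))`, summed over
compositions `(r₁,…,r_k)` of `m`. -/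
noncomputable def PsiOp (F : Fin n → Pn k n) (m : ℕ) (a : Pn k n) : Pn k n :=
  ∑ c : Composition m,
    (-1 : Pn k n) ^ (c.length - 1) * ((c.blocks.getLastD 0 : ℕ) : Pn k n) *
      (c.blocks.foldr (fun r b => Zc F r b) a)

open Finset

set_option linter.unusedSectionVars false

noncomputable def Zl (F : Fin n → Pn k n) (r : ℕ) : Module.End k (Pn k n) :=
  ((Polynomial.lcoeff (Pn k n) r).restrictScalars k).comp
    (MvPolynomial.aeval
      (fun j => Polynomial.C (MvPolynomial.X j) + Polynomial.C (F j) * Polynomial.X :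
        Fin n → Polynomial (Pn k n))).toLinearMap

lemma Zl_apply (F : Fin n → Pn k n) (r : ℕ) (a : Pn k n) : Zl F r a = Zc F r a := rfl

lemma Zl_zero (F : Fin n → Pn k n) (a : Pn k n) : Zl F 0 a = a := by
  have h : (Polynomial.evalRingHom (0 : Pn k n)).comp
      (MvPolynomial.aeval
        (fun j => Polynomial.C (MvPolynomial.X j) + Polynomial.C (F j) * Polynomial.X :
          Fin n → Polynomial (Pn k n))).toRingHom = RingHom.id _ := by
    apply MvPolynomial.ringHom_ext <;> intro i <;> simp
  have := congrArg (fun g => g a) h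
  simpa [Zl, Polynomial.coeff_zero_eq_eval_zero] using this

lemma Zl_one (F : Fin n → Pn k n) (r : ℕ) : Zl F r 1 = if r = 0 then 1 else 0 := by
  simp [Zl, Polynomial.coeff_one]

lemma Zl_X (F : Fin n → Pn k n) (r : ℕ) (i : Fin n) :
    Zl F r (X i) = if r = 0 then X i else if r = 1 then F i else 0 := by
  simp only [Zl, LinearMap.comp_apply, AlgHom.toLinearMap_apply, aeval_X,
    LinearMap.coe_restrictScalars, Polynomial.lcoeff_apply, Polynomial.coeff_add,
    Polynomial.coeff_C, Polynomial.coeff_C_mul, Polynomial.coeff_X]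
  rcases r with _|_|r <;> simp

lemma Zl_mul (F : Fin n → Pn k n) (r : ℕ) (a b : Pn k n) :
    Zl F r (a * b) = ∑ p ∈ Finset.HasAntidiagonal.antidiagonal r, Zl F p.1 a * Zl F p.2 b := by
  simp [Zl, map_mul, Polynomial.coeff_mul]

noncomputable def Sl (F : Fin n → Pn k n) : ℕ → Module.End k (Pn k n)
  | 0 => 1
  | (j+1) => -∑ r : Fin (j+1), Zl F (r+1) * Sl F (j - r)
  termination_by j => j
  decreasing_by omega

noncomputable def Sl' (F : Fin n → Pn k n) : ℕ → Module.End k (Pn k n)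
  | 0 => 1
  | (j+1) => -∑ r : Fin (j+1), Sl' F (j - r) * Zl F (r+1)
  termination_by j => j
  decreasing_by omega

lemma Sl_succ (F : Fin n → Pn k n) (j : ℕ) :
    Sl F (j+1) = -∑ r : Fin (j+1), Zl F (r+1) * Sl F (j - r) := by rw [Sl]

lemma Sl'_succ (F : Fin n → Pn k n) (j : ℕ) :
    Sl' F (j+1) = -∑ r : Fin (j+1), Sl' F (j - r) * Zl F (r+1) := by rw [Sl']

noncomputable def Zser (F : Fin n → Pn k n) : PowerSeries (Module.End k (Pn k n)) :=
  PowerSeries.mk (Zl F)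
noncomputable def Sser (F : Fin n → Pn k n) : PowerSeries (Module.End k (Pn k n)) :=
  PowerSeries.mk (Sl F)
noncomputable def Sser' (F : Fin n → Pn k n) : PowerSeries (Module.End k (Pn k n)) :=
  PowerSeries.mk (Sl' F)

lemma Zl_zero' (F : Fin n → Pn k n) : Zl F 0 = 1 := LinearMap.ext (Zl_zero F)

lemma Zser_mul_Sser (F : Fin n → Pn k n) : Zser F * Sser F = 1 := by
  apply PowerSeries.ext; intro d
  rw [PowerSeries.coeff_mul]
  simp only [Zser, Sser, PowerSeries.coeff_mk]
  rw [Finset.Nat.sum_antidiagonal_eq_sum_range_succ_mk]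
  cases d with
  | zero => simp [Zl_zero', Sl, PowerSeries.coeff_one]
  | succ j =>
    rw [Finset.sum_range_succ']
    simp only [Nat.sub_zero, Nat.succ_sub_succ, Zl_zero', one_mul]
    rw [Sl_succ, Fin.sum_univ_eq_sum_range (fun r => Zl F (r+1) * Sl F (j - r))]
    simp [PowerSeries.coeff_one]

lemma Sser'_mul_Zser (F : Fin n → Pn k n) : Sser' F * Zser F = 1 := by
  apply PowerSeries.ext; intro d
  rw [PowerSeries.coeff_mul]
  simp only [Zser, Sser', PowerSeries.coeff_mk]
  rw [Finset.Nat.sum_antidiagonal_eq_sum_range_succ_mk]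
  cases d with
  | zero => simp [Zl_zero', Sl', PowerSeries.coeff_one]
  | succ j =>
    rw [Finset.sum_range_succ]
    simp only [Nat.sub_self, Zl_zero', mul_one]
    rw [Sl'_succ, Fin.sum_univ_eq_sum_range (fun r => Sl' F (j - r) * Zl F (r+1))]
    have key : ∑ i ∈ Finset.range (j+1), Sl' F i * Zl F (j+1-i)
        = ∑ r ∈ Finset.range (j+1), Sl' F (j-r) * Zl F (r+1) := by
      rw [← Finset.sum_range_reflect (fun i => Sl' F i * Zl F (j + 1 - i)) (j+1)]
      apply Finset.sum_congr rfl
      intro r hr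
      simp only [Finset.mem_range] at hr
      have h1 : j+1-1-r = j - r := by omega
      have h2 : j+1-(j-r) = r+1 := by omega
      rw [h1, h2]
    simp [PowerSeries.coeff_one, key]

lemma Sser_mul_Zser (F : Fin n → Pn k n) : Sser F * Zser F = 1 := by
  have h1 := Zser_mul_Sser F
  have h2 := Sser'_mul_Zser F
  have h3 : Sser' F = Sser F := by
    calc Sser' F = Sser' F * (Zser F * Sser F) := by rw [h1, mul_one]
    _ = (Sser' F * Zser F) * Sser F := by rw [mul_assoc]
    _ = Sser F := by rw [h2, one_mul]
  rw [← h3, h2]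

/-- Right inverse property, applied form. -/
lemma ZS_apply (F : Fin n → Pn k n) (d : ℕ) (a : Pn k n) :
    ∑ p ∈ Finset.HasAntidiagonal.antidiagonal d, Zl F p.1 (Sl F p.2 a) = if d = 0 then a else 0 := by
  have := congrArg (fun f => (PowerSeries.coeff d f) a) (Zser_mul_Sser F)
  simp only [PowerSeries.coeff_mul, Zser, Sser, PowerSeries.coeff_mk,
    PowerSeries.coeff_one] at this
  split_ifs with h <;> simpa [h, LinearMap.sum_apply, Module.End.mul_apply] using this

/-- Left inverse property, applied form. -/
lemma SZ_apply (F : Fin n → Pn k n) (d : ℕ) (a : Pn k n) :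
    ∑ p ∈ Finset.HasAntidiagonal.antidiagonal d, Sl F p.1 (Zl F p.2 a) = if d = 0 then a else 0 := by
  have := congrArg (fun f => (PowerSeries.coeff d f) a) (Sser_mul_Zser F)
  simp only [PowerSeries.coeff_mul, Zser, Sser, PowerSeries.coeff_mk,
    PowerSeries.coeff_one] at this
  split_ifs with h <;> simpa [h, LinearMap.sum_apply, Module.End.mul_apply] using this


lemma sum4 {M : Type*} [AddCommMonoid M] (N : ℕ) (f : ℕ → ℕ → ℕ → ℕ → M) :
    (∑ st ∈ antidiagonal N, ∑ up ∈ antidiagonal st.1, ∑ vq ∈ antidiagonal st.2,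
      f up.1 up.2 vq.1 vq.2)
  = ∑ st ∈ antidiagonal N, ∑ uv ∈ antidiagonal st.1, ∑ pq ∈ antidiagonal st.2,
      f uv.1 pq.1 uv.2 pq.2 := by
  have l1 : (∑ st ∈ antidiagonal N, ∑ up ∈ antidiagonal st.1, ∑ vq ∈ antidiagonal st.2,
      f up.1 up.2 vq.1 vq.2)
      = ∑ x ∈ (antidiagonal N).sigma (fun st => antidiagonal st.1 ×ˢ antidiagonal st.2),
          f x.2.1.1 x.2.1.2 x.2.2.1 x.2.2.2 := by
    rw [Finset.sum_sigma]
    exact Finset.sum_congr rfl fun st _ =>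
      (Finset.sum_product (f := fun (y : (ℕ × ℕ) × (ℕ × ℕ)) => f y.1.1 y.1.2 y.2.1 y.2.2) ..).symm
  have r1 : (∑ st ∈ antidiagonal N, ∑ uv ∈ antidiagonal st.1, ∑ pq ∈ antidiagonal st.2,
      f uv.1 pq.1 uv.2 pq.2)
      = ∑ x ∈ (antidiagonal N).sigma (fun st => antidiagonal st.1 ×ˢ antidiagonal st.2),
          f x.2.1.1 x.2.2.1 x.2.1.2 x.2.2.2 := by
    rw [Finset.sum_sigma]
    exact Finset.sum_congr rfl fun st _ =>
      (Finset.sum_product (f := fun (y : (ℕ × ℕ) × (ℕ × ℕ)) => f y.1.1 y.2.1 y.1.2 y.2.2) ..).symm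
  rw [l1, r1]
  apply Finset.sum_nbij'
    (i := fun x => ⟨(x.2.1.1 + x.2.2.1, x.2.1.2 + x.2.2.2), ((x.2.1.1, x.2.2.1), (x.2.1.2, x.2.2.2))⟩)
    (j := fun x => ⟨(x.2.1.1 + x.2.2.1, x.2.1.2 + x.2.2.2), ((x.2.1.1, x.2.2.1), (x.2.1.2, x.2.2.2))⟩)
  · rintro ⟨⟨s, t⟩, ⟨⟨u, p⟩, ⟨v, q⟩⟩⟩ h
    simp only [Finset.mem_sigma, Finset.mem_product, Finset.HasAntidiagonal.mem_antidiagonal] at h ⊢; simp at h ⊢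
    omega
  · rintro ⟨⟨s, t⟩, ⟨⟨u, v⟩, ⟨p, q⟩⟩⟩ h
    simp only [Finset.mem_sigma, Finset.mem_product, Finset.HasAntidiagonal.mem_antidiagonal] at h ⊢; simp at h ⊢
    omega
  · rintro ⟨⟨s, t⟩, ⟨⟨u, p⟩, ⟨v, q⟩⟩⟩ h
    simp only [Finset.mem_sigma, Finset.mem_product, Finset.HasAntidiagonal.mem_antidiagonal] at h
    obtain ⟨h1, h2, h3⟩ := h
    subst h2 h3
    rfl
  · rintro ⟨⟨s, t⟩, ⟨⟨u, v⟩, ⟨p, q⟩⟩⟩ h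
    simp only [Finset.mem_sigma, Finset.mem_product, Finset.HasAntidiagonal.mem_antidiagonal] at h
    obtain ⟨h1, h2, h3⟩ := h
    subst h2 h3
    rfl
  · rintro ⟨⟨s, t⟩, ⟨⟨u, p⟩, ⟨v, q⟩⟩⟩ h
    rfl

lemma Sl_one (F : Fin n → Pn k n) (u : ℕ) : Sl F u 1 = if u = 0 then 1 else 0 := by
  induction u using Nat.strong_induction_on with
  | _ u IH =>
    cases u with
    | zero => simp [Sl]
    | succ j =>
      rw [Sl_succ]
      simp only [LinearMap.neg_apply, LinearMap.sum_apply, Module.End.mul_apply]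
      have : ∀ r : Fin (j+1), Zl F (r+1) (Sl F (j - r) 1) = 0 := by
        intro r
        rw [IH (j - r) (by omega)]
        split_ifs <;> simp [Zl_one]
      simp [this]

lemma Sl_mul (F : Fin n → Pn k n) (j : ℕ) (a b : Pn k n) :
    Sl F j (a * b) = ∑ p ∈ antidiagonal j, Sl F p.1 a * Sl F p.2 b := by
  induction j using Nat.strong_induction_on with
  | _ j IH =>
    cases j with
    | zero => simp [Sl]
    | succ j =>
      rw [Sl_succ]
      simp only [LinearMap.neg_apply, LinearMap.sum_apply, Module.End.mul_apply]
      have e1 : ∀ r : Fin (j+1), Zl F (r+1) (Sl F (j - r) (a * b))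
          = ∑ pq ∈ antidiagonal (j - (r:ℕ)), ∑ uv ∈ antidiagonal ((r:ℕ)+1),
              Zl F uv.1 (Sl F pq.1 a) * Zl F uv.2 (Sl F pq.2 b) := by
        intro r
        rw [IH (j - r) (by omega), map_sum]
        exact Finset.sum_congr rfl fun pq _ => Zl_mul F (r+1) _ _
      -- total sum T
      have hT0 : (∑ st ∈ antidiagonal (j+1), ∑ up ∈ antidiagonal st.1, ∑ vq ∈ antidiagonal st.2,
          Zl F up.1 (Sl F up.2 a) * Zl F vq.1 (Sl F vq.2 b)) = 0 := by
        apply Finset.sum_eq_zero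
        intro st hst
        rw [← Finset.sum_mul_sum]
        rw [ZS_apply, ZS_apply]
        simp only [Finset.HasAntidiagonal.mem_antidiagonal] at hst
        split_ifs with h1 h2 <;> first | (exfalso; omega) | simp
      have hT := sum4 (j+1) (fun u p v q => Zl F u (Sl F p a) * Zl F v (Sl F q b))
      rw [hT0] at hT
      -- split T by first index
      have hsplit : (0:Pn k n) = (∑ pq ∈ antidiagonal (j+1), Sl F pq.1 a * Sl F pq.2 b)
          + ∑ r ∈ Finset.range (j+1), ∑ pq ∈ antidiagonal (j - r), ∑ uv ∈ antidiagonal (r+1),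
              Zl F uv.1 (Sl F pq.1 a) * Zl F uv.2 (Sl F pq.2 b) := by
        rw [hT]
        rw [Finset.Nat.sum_antidiagonal_eq_sum_range_succ_mk, Finset.sum_range_succ']
        rw [add_comm]
        refine congrArg₂ (· + ·) ?_ ?_
        · simp [Zl_zero]
        · apply Finset.sum_congr rfl
          intro r hr
          simp only [Nat.succ_sub_succ]
          rw [Finset.sum_comm]
      rw [Fin.sum_univ_eq_sum_range (fun r => Zl F (r+1) (Sl F (j - r) (a*b)))]
      have e1' : ∀ r ∈ Finset.range (j+1), Zl F (r+1) (Sl F (j - r) (a * b))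
          = ∑ pq ∈ antidiagonal (j - r), ∑ uv ∈ antidiagonal (r+1),
              Zl F uv.1 (Sl F pq.1 a) * Zl F uv.2 (Sl F pq.2 b) := by
        intro r hr
        simp only [Finset.mem_range] at hr
        exact e1 ⟨r, hr⟩
      rw [Finset.sum_congr rfl e1']
      linear_combination hsplit

noncomputable def Theta (F : Fin n → Pn k n) (m : ℕ) : Module.End k (Pn k n) :=
  ∑ p ∈ antidiagonal m, p.1 • (Zl F p.1 * Sl F p.2)

lemma Theta_apply (F : Fin n → Pn k n) (m : ℕ) (a : Pn k n) :
    Theta F m a = ∑ p ∈ antidiagonal m, p.1 • Zl F p.1 (Sl F p.2 a) := by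
  simp [Theta, LinearMap.sum_apply, Module.End.mul_apply]

lemma Theta_one (F : Fin n → Pn k n) (m : ℕ) : Theta F m 1 = 0 := by
  rw [Theta_apply]
  apply Finset.sum_eq_zero
  intro p hp
  by_cases h1 : p.1 = 0
  · simp [h1]
  · rw [Sl_one]
    split_ifs with h2
    · simp [Zl_one, h1]
    · simp

lemma Theta_leibniz (F : Fin n → Pn k n) (m : ℕ) (a b : Pn k n) :
    Theta F m (a * b) = Theta F m a * b + a * Theta F m b := by
  rw [Theta_apply]
  have expand : ∀ p ∈ antidiagonal m, p.1 • Zl F p.1 (Sl F p.2 (a * b))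
      = (∑ cd ∈ antidiagonal p.1, ∑ pq ∈ antidiagonal p.2,
          cd.1 • (Zl F cd.1 (Sl F pq.1 a) * Zl F cd.2 (Sl F pq.2 b)))
        + ∑ cd ∈ antidiagonal p.1, ∑ pq ∈ antidiagonal p.2,
          cd.2 • (Zl F cd.1 (Sl F pq.1 a) * Zl F cd.2 (Sl F pq.2 b)) := by
    intro p hp
    rw [Sl_mul, map_sum, Finset.smul_sum]
    have step1 : ∀ pq ∈ antidiagonal p.2, p.1 • Zl F p.1 (Sl F pq.1 a * Sl F pq.2 b)
        = ∑ cd ∈ antidiagonal p.1,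
            (cd.1 • (Zl F cd.1 (Sl F pq.1 a) * Zl F cd.2 (Sl F pq.2 b))
              + cd.2 • (Zl F cd.1 (Sl F pq.1 a) * Zl F cd.2 (Sl F pq.2 b))) := by
      intro pq _
      rw [Zl_mul, Finset.smul_sum]
      apply Finset.sum_congr rfl
      intro cd hcd
      simp only [Finset.HasAntidiagonal.mem_antidiagonal] at hcd
      rw [← hcd, add_smul]
    rw [Finset.sum_congr rfl step1, Finset.sum_comm]
    simp only [Finset.sum_add_distrib]
  rw [Finset.sum_congr rfl expand, Finset.sum_add_distrib]
  have hA : (∑ st ∈ antidiagonal m, ∑ cd ∈ antidiagonal st.1, ∑ pq ∈ antidiagonal st.2,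
      cd.1 • (Zl F cd.1 (Sl F pq.1 a) * Zl F cd.2 (Sl F pq.2 b))) = Theta F m a * b := by
    rw [← sum4 m (fun c p d q => c • (Zl F c (Sl F p a) * Zl F d (Sl F q b)))]
    have fact : ∀ st ∈ antidiagonal m,
        (∑ up ∈ antidiagonal st.1, ∑ vq ∈ antidiagonal st.2,
          up.1 • (Zl F up.1 (Sl F up.2 a) * Zl F vq.1 (Sl F vq.2 b)))
        = (∑ up ∈ antidiagonal st.1, up.1 • Zl F up.1 (Sl F up.2 a))
            * (if st.2 = 0 then b else 0) := by
      intro st _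
      rw [← ZS_apply F st.2 b, Finset.sum_mul_sum]
      exact Finset.sum_congr rfl fun up _ => Finset.sum_congr rfl fun vq _ =>
        (smul_mul_assoc _ _ _).symm
    rw [Finset.sum_congr rfl fact]
    rw [Finset.sum_eq_single_of_mem ((m, 0) : ℕ × ℕ) (by simp)]
    · rw [if_pos rfl, ← Theta_apply]
    · intro p hp hne
      simp only [Finset.HasAntidiagonal.mem_antidiagonal] at hp
      rw [if_neg, mul_zero]
      intro h2
      exact hne (by ext <;> simp [h2] <;> omega)
  have hB : (∑ st ∈ antidiagonal m, ∑ cd ∈ antidiagonal st.1, ∑ pq ∈ antidiagonal st.2,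
      cd.2 • (Zl F cd.1 (Sl F pq.1 a) * Zl F cd.2 (Sl F pq.2 b))) = a * Theta F m b := by
    rw [← sum4 m (fun c p d q => d • (Zl F c (Sl F p a) * Zl F d (Sl F q b)))]
    have fact : ∀ st ∈ antidiagonal m,
        (∑ up ∈ antidiagonal st.1, ∑ vq ∈ antidiagonal st.2,
          vq.1 • (Zl F up.1 (Sl F up.2 a) * Zl F vq.1 (Sl F vq.2 b)))
        = (if st.1 = 0 then a else 0)
            * (∑ vq ∈ antidiagonal st.2, vq.1 • Zl F vq.1 (Sl F vq.2 b)) := by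
      intro st _
      rw [← ZS_apply F st.1 a, Finset.sum_mul_sum]
      exact Finset.sum_congr rfl fun up _ => Finset.sum_congr rfl fun vq _ =>
        (mul_smul_comm _ _ _).symm
    rw [Finset.sum_congr rfl fact]
    rw [Finset.sum_eq_single_of_mem ((0, m) : ℕ × ℕ) (by simp)]
    · rw [if_pos rfl, ← Theta_apply]
    · intro p hp hne
      simp only [Finset.HasAntidiagonal.mem_antidiagonal] at hp
      rw [if_neg, zero_mul]
      intro h2
      exact hne (by ext <;> simp [h2] <;> omega)
  rw [hA, hB]

lemma Sl_zero (F : Fin n → Pn k n) (a : Pn k n) : Sl F 0 a = a := by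
  rw [Sl]; rfl

lemma Sl_X (F : Fin n → Pn k n) (u : ℕ) (i : Fin n) :
    Sl F (u+1) (X i) = -(Sl F u (F i)) := by
  have h := SZ_apply F (u+1) (X i)
  rw [Finset.Nat.sum_antidiagonal_eq_sum_range_succ_mk] at h
  rw [Finset.sum_range_succ, Finset.sum_range_succ] at h
  have hz : ∀ r ∈ Finset.range u, Sl F r (Zl F (u+1-r) (X i)) = 0 := by
    intro r hr
    simp only [Finset.mem_range] at hr
    rw [Zl_X, if_neg (by omega), if_neg (by omega), map_zero]
  rw [Finset.sum_eq_zero hz] at h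
  have h1 : u + 1 - u = 1 := by omega
  have h2 : u + 1 - (u + 1) = 0 := by omega
  rw [h1, h2, Zl_X, Zl_X] at h
  simp at h
  linear_combination h

lemma Theta_apply_range (F : Fin n → Pn k n) (j : ℕ) (a : Pn k n) :
    Theta F j a = ∑ r ∈ Finset.range (j+1), r • Zl F r (Sl F (j - r) a) := by
  rw [Theta_apply, Finset.Nat.sum_antidiagonal_eq_sum_range_succ_mk]

lemma Theta_X_one (F : Fin n → Pn k n) (i : Fin n) : Theta F 1 (X i) = F i := by
  rw [Theta_apply_range]
  rw [Finset.sum_range_succ, Finset.sum_range_succ, Finset.sum_range_zero]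
  show 0 + 0 • _ + 1 • Zl F 1 (Sl F 0 (X i)) = F i
  rw [Sl_zero, Zl_X]
  simp

lemma Theta_X_succ (F : Fin n → Pn k n) (m : ℕ) (i : Fin n) :
    Theta F (m+2) (X i) = -(Theta F (m+1) (F i)) := by
  rw [Theta_apply_range, Theta_apply_range]
  rw [Finset.sum_range_succ]
  have hlast : (m+2) • Zl F (m+2) (Sl F (m+2-(m+2)) (X i)) = 0 := by
    have h2 : m + 2 - (m+2) = 0 := by omega
    rw [h2]
    rw [Sl_zero, Zl_X, if_neg (by omega), if_neg (by omega), smul_zero]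
  rw [hlast, add_zero]
  rw [← Finset.sum_neg_distrib]
  apply Finset.sum_congr rfl
  intro r hr
  simp only [Finset.mem_range] at hr
  have h3 : m + 2 - r = (m + 1 - r) + 1 := by omega
  rw [h3, Sl_X, map_neg, smul_neg]




noncomputable def ThetaD (F : Fin n → Pn k n) (m : ℕ) : Der k n where
  toLinearMap := Theta F (m+1)
  map_one_eq_zero' := Theta_one F (m+1)
  leibniz' := fun a b => by
    have h := Theta_leibniz F (m+1) a b
    simp only [smul_eq_mul]
    rw [h]; ring

lemma ThetaD_apply (F : Fin n → Pn k n) (m : ℕ) (a : Pn k n) :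
    ThetaD F m a = Theta F (m+1) a := rfl

lemma ThetaD_zero (F : Fin n → Pn k n) : ThetaD F 0 = MvPolynomial.mkDerivation k F :=
  derivation_ext fun i => by
    rw [ThetaD_apply, Theta_X_one, mkDerivation_X]

lemma ThetaD_succ (F : Fin n → Pn k n) (m : ℕ) :
    ThetaD F (m+1) = -(lsMul (ThetaD F m) (MvPolynomial.mkDerivation k F)) :=
  derivation_ext fun i => by
    rw [ThetaD_apply, Theta_X_succ]
    simp only [Derivation.neg_apply, lsMul, mkDerivation_X]
    rw [← ThetaD_apply]

lemma lsMul_zsmul (z : ℤ) (D E : Der k n) : lsMul (z • D) E = z • lsMul D E :=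
  derivation_ext fun i => by simp [lsMul, mkDerivation_X]

lemma ThetaD_eq (F : Fin n → Pn k n) (m : ℕ) :
    ThetaD F m = ((-1:ℤ)^m) • rpow (MvPolynomial.mkDerivation k F) (m+1) := by
  induction m with
  | zero => simpa [rpow] using ThetaD_zero F
  | succ m IH =>
    rw [ThetaD_succ, IH, lsMul_zsmul]
    have hr : rpow (MvPolynomial.mkDerivation k F) (m+2)
        = lsMul (rpow (MvPolynomial.mkDerivation k F) (m+1)) (MvPolynomial.mkDerivation k F) := by
      rw [rpow]
    rw [← hr, pow_succ]
    rw [mul_smul]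
    simp

lemma List.headI_cons_tail' {l : List ℕ} (h : l ≠ []) : l.headI :: l.tail = l := by
  cases l with
  | nil => exact absurd rfl h
  | cons a t => rfl

lemma List.headI_mem' {l : List ℕ} (h : l ≠ []) : l.headI ∈ l := by
  cases l with
  | nil => exact absurd rfl h
  | cons a t => simp

/-- Splitting a composition of `m+1` by its first block. -/
def splitEquiv (m : ℕ) : Composition (m+1) ≃ (Σ r : Fin (m+1), Composition (m - r)) where
  toFun c :=
    ⟨⟨c.blocks.headI - 1, by
      have hne : c.blocks ≠ [] := by
        intro h
        have := c.blocks_sum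
        rw [h] at this
        simp at this
      have hpos : 0 < c.blocks.headI := c.blocks_pos (List.headI_mem' hne)
      have hle : c.blocks.headI ≤ m + 1 := by
        have : c.blocks.headI :: c.blocks.tail = c.blocks := List.headI_cons_tail' hne
        have h2 := c.blocks_sum
        rw [← this, List.sum_cons] at h2
        omega
      omega⟩,
    { blocks := c.blocks.tail
      blocks_pos := fun hi => c.blocks_pos (List.mem_of_mem_tail hi)
      blocks_sum := by
        have hne : c.blocks ≠ [] := by
          intro h
          have := c.blocks_sum
          rw [h] at this
          simp at this
        have h1 : c.blocks.headI :: c.blocks.tail = c.blocks := List.headI_cons_tail' hne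
        have h2 := c.blocks_sum
        have hpos : 0 < c.blocks.headI := c.blocks_pos (List.headI_mem' hne)
        rw [← h1, List.sum_cons] at h2
        show c.blocks.tail.sum = m - (c.blocks.headI - 1)
        omega }⟩
  invFun x :=
    { blocks := ((x.1 : ℕ) + 1) :: x.2.blocks
      blocks_pos := by
        intro i hi
        rcases List.mem_cons.1 hi with h | h
        · omega
        · exact x.2.blocks_pos h
      blocks_sum := by
        rw [List.sum_cons, x.2.blocks_sum]
        have := x.1.2
        omega }
  left_inv c := by
    have hne : c.blocks ≠ [] := by
      intro h
      have := c.blocks_sum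
      rw [h] at this
      simp at this
    have hpos : 0 < c.blocks.headI := c.blocks_pos (List.headI_mem' hne)
    apply Composition.ext
    simp only
    rw [show c.blocks.headI - 1 + 1 = c.blocks.headI by omega]
    exact List.headI_cons_tail' hne
  right_inv x := by
    rcases x with ⟨r, c⟩
    simp only [List.headI_cons, List.tail_cons, Nat.add_sub_cancel]
    congr 1

instance : Unique (Composition 0) where
  default := ⟨[], fun h => absurd h List.not_mem_nil, rfl⟩
  uniq c := by
    apply Composition.ext
    have := c.blocks_sum
    cases hb : c.blocks with
    | nil => rfl
    | cons hd tl =>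
      exfalso
      have hpos : 0 < hd := c.blocks_pos (hb ▸ List.mem_cons_self (a := hd) (l := tl))
      rw [hb, List.sum_cons] at this
      omega

lemma neg_one_pow_mul (l : ℕ) (x : Pn k n) : (-1 : Pn k n)^l * x = ((-1:ℤ)^l) • x := by
  rw [zsmul_eq_mul]
  push_cast
  ring

lemma Sl_eq_compSum (F : Fin n → Pn k n) (j : ℕ) (a : Pn k n) :
    Sl F j a = ∑ c : Composition j,
      ((-1:ℤ) ^ c.length) • (c.blocks.foldr (fun r b => Zc F r b) a) := by
  induction j using Nat.strong_induction_on with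
  | _ j IH =>
    cases j with
    | zero =>
      rw [Sl_zero, Fintype.sum_unique]
      show a = ((-1:ℤ) ^ (List.length ([] : List ℕ))) •
        (List.foldr (fun r b => Zc F r b) a [])
      simp
    | succ j =>
      rw [Fintype.sum_equiv ((splitEquiv j).symm)
        (fun x : Σ r : Fin (j+1), Composition (j - r) =>
          ((-1:ℤ) ^ (x.2.length + 1)) • Zc F ((x.1:ℕ)+1) (x.2.blocks.foldr (fun r b => Zc F r b) a))
        (fun c : Composition (j+1) =>
          ((-1:ℤ) ^ c.length) • (c.blocks.foldr (fun r b => Zc F r b) a))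
        (fun x => by
          rcases x with ⟨r, c⟩
          simp only [splitEquiv, Equiv.coe_fn_symm_mk, Composition.length, List.length_cons,
            List.foldr_cons]) |>.symm]
      rw [← Finset.univ_sigma_univ, Finset.sum_sigma]
      rw [Sl_succ]
      simp only [LinearMap.neg_apply, LinearMap.sum_apply, Module.End.mul_apply]
      rw [← Finset.sum_neg_distrib]
      apply Finset.sum_congr rfl
      intro r _
      rw [IH (j - r) (by omega), map_sum]
      rw [← Finset.sum_neg_distrib]
      apply Finset.sum_congr rfl
      intro c _
      rw [← Zl_apply, map_zsmul, pow_succ]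
      simp [mul_smul]


/-- `Σ (−1)^{k−1} r₁ Z_{r₁}(Z_{r₂}(⋯ Z_{r_k}(a)⋯)) = (−1)^{m−1} D^{[m]}(a)`,
the sum over all compositions `(r₁,…,r_k)` of `m`. -/
theorem theta_eq_rpow_apply (hn : 1 ≤ n) (F : Fin n → Pn k n) (m : ℕ) (hm : 1 ≤ m)
    (a : Pn k n) :
    (∑ c : Composition m,
        (-1 : Pn k n) ^ (c.length - 1) * ((c.blocks.headI : ℕ) : Pn k n) *
          (c.blocks.foldr (fun r b => Zc F r b) a)) =
      (-1 : Pn k n) ^ (m - 1) * (rpow (MvPolynomial.mkDerivation k F) m a) := by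
  obtain ⟨m', rfl⟩ : ∃ m', m = m' + 1 := ⟨m - 1, by omega⟩
  have key : ∀ (x : Σ r : Fin (m'+1), Composition (m' - r)),
      (-1 : Pn k n) ^ (x.2.length) * (((x.1:ℕ)+1 : ℕ) : Pn k n) *
          Zc F ((x.1:ℕ)+1) (x.2.blocks.foldr (fun r b => Zc F r b) a)
      = ((x.1:ℕ)+1) • Zl F ((x.1:ℕ)+1)
          (((-1:ℤ) ^ x.2.length) • (x.2.blocks.foldr (fun r b => Zc F r b) a)) := by
    intro x
    rw [map_zsmul, Zl_apply, nsmul_eq_mul, zsmul_eq_mul]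
    push_cast
    ring
  calc (∑ c : Composition (m'+1),
        (-1 : Pn k n) ^ (c.length - 1) * ((c.blocks.headI : ℕ) : Pn k n) *
          (c.blocks.foldr (fun r b => Zc F r b) a))
      = ∑ x : Σ r : Fin (m'+1), Composition (m' - r),
          (-1 : Pn k n) ^ (x.2.length) * (((x.1:ℕ)+1 : ℕ) : Pn k n) *
            Zc F ((x.1:ℕ)+1) (x.2.blocks.foldr (fun r b => Zc F r b) a) := by
        refine (Fintype.sum_equiv ((splitEquiv m').symm) _ _ ?_).symm
        rintro ⟨r, c⟩
        simp only [splitEquiv, Equiv.coe_fn_symm_mk, Composition.length, List.length_cons,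
          List.foldr_cons, List.headI_cons, Nat.succ_sub_one]
    _ = ∑ r : Fin (m'+1), ((r:ℕ)+1) • Zl F ((r:ℕ)+1) (Sl F (m' - r) a) := by
        rw [Finset.sum_congr rfl (fun x _ => key x)]
        rw [← Finset.univ_sigma_univ, Finset.sum_sigma]
        apply Finset.sum_congr rfl
        intro r _
        dsimp only
        rw [← Finset.smul_sum, ← map_sum, ← Sl_eq_compSum]
    _ = Theta F (m'+1) a := by
        rw [Theta_apply_range, Finset.sum_range_succ']
        simp only [zero_smul, add_zero, Nat.succ_sub_succ]
        rw [Fin.sum_univ_eq_sum_range (fun r => (r+1) • Zl F (r+1) (Sl F (m' - r) a))]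
    _ = ThetaD F m' a := rfl
    _ = (-1 : Pn k n) ^ (m'+1-1) * (rpow (MvPolynomial.mkDerivation k F) (m'+1) a) := by
        rw [ThetaD_eq]
        rw [Nat.succ_sub_one, neg_one_pow_mul]
        simp
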